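/- Let K be a field, let r ∈ K be a primitive n-th root of unity with n > 1, let α = 2r, β = −r², γ ∈ K, and let A = A(α, β, γ). Set w = du − r·ud + γ/(r−1) ∈ A. Then w is a normal element of A (i.e., Aw = wA, so Aw is a two-sided ideal), and the quotient Ā = A/Aw is generated by the images d̄, ū of d, u subject to the single relation d̄ū − r·ūd̄ + γ/(r−1) = 0; consequently Ā is isomorphic as a K-algebra to the quantized Weyl algebra C(r) if γ ≠ 0, and to the coordinate algebra of the quantum plane B(r) if γ = 0. -/

import Mathlib

noncomputable section

open FreeAlgebra

/-- Defining relations of the down-up algebra `A(α, β, γ)`: the generator `ι K 0`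
plays the role of `d` and `ι K 1` plays the role of `u`. -/
inductive DownUpRel (K : Type) [Field K] (α β γ : K) :
    FreeAlgebra K (Fin 2) → FreeAlgebra K (Fin 2) → Prop
  | rel1 : DownUpRel K α β γ
      (ι K (0 : Fin 2) * ι K (0 : Fin 2) * ι K (1 : Fin 2))
      (α • (ι K (0 : Fin 2) * ι K (1 : Fin 2) * ι K (0 : Fin 2)) +
        β • (ι K (1 : Fin 2) * ι K (0 : Fin 2) * ι K (0 : Fin 2)) +
        γ • ι K (0 : Fin 2))
  | rel2 : DownUpRel K α β γ
      (ι K (0 : Fin 2) * ι K (1 : Fin 2) * ι K (1 : Fin 2))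
      (α • (ι K (1 : Fin 2) * ι K (0 : Fin 2) * ι K (1 : Fin 2)) +
        β • (ι K (1 : Fin 2) * ι K (1 : Fin 2) * ι K (0 : Fin 2)) +
        γ • ι K (1 : Fin 2))

/-- The down-up algebra `A(α, β, γ)`. -/
abbrev DownUpAlgebra (K : Type) [Field K] (α β γ : K) : Type :=
  RingQuot (DownUpRel K α β γ)

/-- The generator `d` of the down-up algebra. -/
def DownUpAlgebra.d (K : Type) [Field K] (α β γ : K) : DownUpAlgebra K α β γ :=
  RingQuot.mkAlgHom K (DownUpRel K α β γ) (ι K (0 : Fin 2))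

/-- The generator `u` of the down-up algebra. -/
def DownUpAlgebra.u (K : Type) [Field K] (α β γ : K) : DownUpAlgebra K α β γ :=
  RingQuot.mkAlgHom K (DownUpRel K α β γ) (ι K (1 : Fin 2))

/-- Defining relation of the quantum plane `B(q)`: `a * b = q • (b * a)`, where
`ι K 0` plays the role of `a` and `ι K 1` plays the role of `b`. -/
inductive QuantumPlaneRel (K : Type) [Field K] (q : K) :
    FreeAlgebra K (Fin 2) → FreeAlgebra K (Fin 2) → Prop
  | rel : QuantumPlaneRel K q (ι K (0 : Fin 2) * ι K (1 : Fin 2))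
      (q • (ι K (1 : Fin 2) * ι K (0 : Fin 2)))

/-- The coordinate algebra of the quantum plane `B(q)`. -/
abbrev QuantumPlane (K : Type) [Field K] (q : K) : Type :=
  RingQuot (QuantumPlaneRel K q)

/-- The generator `a` of the quantum plane. -/
def QuantumPlane.a (K : Type) [Field K] (q : K) : QuantumPlane K q :=
  RingQuot.mkAlgHom K (QuantumPlaneRel K q) (ι K (0 : Fin 2))

/-- The generator `b` of the quantum plane. -/
def QuantumPlane.b (K : Type) [Field K] (q : K) : QuantumPlane K q :=
  RingQuot.mkAlgHom K (QuantumPlaneRel K q) (ι K (1 : Fin 2))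

/-- Defining relation of the quantized Weyl algebra `C(q)`: `a * b = q • (b * a) + 1`,
where `ι K 0` plays the role of `a` and `ι K 1` plays the role of `b`. -/
inductive QuantizedWeylRel (K : Type) [Field K] (q : K) :
    FreeAlgebra K (Fin 2) → FreeAlgebra K (Fin 2) → Prop
  | rel : QuantizedWeylRel K q (ι K (0 : Fin 2) * ι K (1 : Fin 2))
      (q • (ι K (1 : Fin 2) * ι K (0 : Fin 2)) + 1)

/-- The quantized Weyl algebra `C(q)`. -/
abbrev QuantizedWeyl (K : Type) [Field K] (q : K) : Type :=
  RingQuot (QuantizedWeylRel K q)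

/-- The generator `a` of the quantized Weyl algebra. -/
def QuantizedWeyl.a (K : Type) [Field K] (q : K) : QuantizedWeyl K q :=
  RingQuot.mkAlgHom K (QuantizedWeylRel K q) (ι K (0 : Fin 2))

/-- The generator `b` of the quantized Weyl algebra. -/
def QuantizedWeyl.b (K : Type) [Field K] (q : K) : QuantizedWeyl K q :=
  RingQuot.mkAlgHom K (QuantizedWeylRel K q) (ι K (1 : Fin 2))

/-- The relation identifying a single element `w` with `0`; `RingQuot` of this relation
is the quotient of the ring by the two-sided ideal generated by `w`. -/
def SingleRel (A : Type) [Ring A] (w : A) : A → A → Prop := fun x y => x = w ∧ y = 0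

namespace DUAux

variable {K : Type} [Field K] {r γ : K}

local notation "𝔸" => DownUpAlgebra K (2*r) (-(r^2)) γ
local notation "dd" => DownUpAlgebra.d K (2*r) (-(r^2)) γ
local notation "uu" => DownUpAlgebra.u K (2*r) (-(r^2)) γ
local notation "ww" => dd * uu - r • (uu * dd) + algebraMap K 𝔸 (γ/(r-1))

lemma relA1 : dd * (dd * uu) =
    (2*r) • (dd * (uu * dd)) + (-(r^2)) • (uu * (dd * dd)) + γ • dd := by
  have h := RingQuot.mkAlgHom_rel K (DownUpRel.rel1 (K := K) (α := 2*r) (β := -(r^2)) (γ := γ))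
  simp only [map_add, map_mul, map_smul] at h
  simpa [DownUpAlgebra.d, DownUpAlgebra.u, mul_assoc] using h

lemma relA2 : dd * (uu * uu) =
    (2*r) • (uu * (dd * uu)) + (-(r^2)) • (uu * (uu * dd)) + γ • uu := by
  have h := RingQuot.mkAlgHom_rel K (DownUpRel.rel2 (K := K) (α := 2*r) (β := -(r^2)) (γ := γ))
  simp only [map_add, map_mul, map_smul] at h
  simpa [DownUpAlgebra.d, DownUpAlgebra.u, mul_assoc] using h

lemma d_mul_w (hr1 : r ≠ 1) : dd * ww = ww * (r • dd) := by
  have h1 : r - 1 ≠ 0 := sub_ne_zero.mpr hr1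
  simp only [mul_add, add_mul, mul_sub, sub_mul, smul_mul_assoc, mul_smul_comm,
    Algebra.algebraMap_eq_smul_one, smul_smul, one_mul, mul_one, smul_add, smul_sub]
  simp only [← mul_assoc, mul_assoc]
  rw [relA1]
  match_scalars <;> field_simp <;> ring

lemma u_mul_w (hr1 : r ≠ 1) (hr0 : r ≠ 0) : uu * ww = ww * (r⁻¹ • uu) := by
  have h1 : r - 1 ≠ 0 := sub_ne_zero.mpr hr1
  simp only [mul_add, add_mul, mul_sub, sub_mul, smul_mul_assoc, mul_smul_comm,
    Algebra.algebraMap_eq_smul_one, smul_smul, one_mul, mul_one, smul_add, smul_sub]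
  simp only [← mul_assoc, mul_assoc]
  rw [relA2]
  match_scalars <;> field_simp <;> ring


/-- Generic: the subalgebra generated by the images of the two generators of a
free algebra on two generators under a surjective algebra map is everything. -/
lemma adjoin_pair_eq_top {B : Type} [Ring B] [Algebra K B]
    (f : FreeAlgebra K (Fin 2) →ₐ[K] B) (hf : Function.Surjective f) :
    Algebra.adjoin K ({f (ι K 0), f (ι K 1)} : Set B) = ⊤ := by
  have hrange : (Set.range (ι K : Fin 2 → FreeAlgebra K (Fin 2))) =
      {ι K 0, ι K 1} := by
    ext x
    simp [Fin.exists_fin_two, or_comm, eq_comm]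
  have h1 : Algebra.adjoin K ({ι K 0, ι K 1} : Set (FreeAlgebra K (Fin 2))) = ⊤ := by
    rw [← hrange]; exact FreeAlgebra.adjoin_range_ι K (Fin 2)
  have := congrArg (Subalgebra.map f) h1
  rwa [AlgHom.map_adjoin, Set.image_pair, Algebra.map_top,
    (AlgHom.range_eq_top f).mpr hf] at this

lemma adjoin_du : Algebra.adjoin K ({dd, uu} : Set 𝔸) = ⊤ :=
  adjoin_pair_eq_top (RingQuot.mkAlgHom K _) (RingQuot.mkAlgHom_surjective _ _)

def scaleHom (s : K) (hs : s ≠ 0) : 𝔸 →ₐ[K] 𝔸 :=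
  RingQuot.liftAlgHom K ⟨FreeAlgebra.lift K ![s • dd, s⁻¹ • uu], by
    rintro x y (h | h)
    · simp only [map_add, map_mul, map_smul, FreeAlgebra.lift_ι_apply,
        Matrix.cons_val_zero, Matrix.cons_val_one, Matrix.head_cons]
      simp only [smul_mul_assoc, mul_smul_comm, smul_smul, smul_add]
      simp only [mul_assoc]
      rw [relA1]
      match_scalars <;> field_simp <;> ring
    · simp only [map_add, map_mul, map_smul, FreeAlgebra.lift_ι_apply,
        Matrix.cons_val_zero, Matrix.cons_val_one, Matrix.head_cons]
      simp only [smul_mul_assoc, mul_smul_comm, smul_smul, smul_add]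
      simp only [mul_assoc]
      rw [relA2]
      match_scalars <;> field_simp <;> ring⟩

lemma scaleHom_d (s : K) (hs : s ≠ 0) : scaleHom s hs dd = s • dd := by
  simp [scaleHom, DownUpAlgebra.d, RingQuot.liftAlgHom_mkAlgHom_apply]

lemma scaleHom_u (s : K) (hs : s ≠ 0) : scaleHom s hs uu = s⁻¹ • uu := by
  simp [scaleHom, DownUpAlgebra.u, RingQuot.liftAlgHom_mkAlgHom_apply]
lemma mul_w_eq (hr1 : r ≠ 1) (hr0 : r ≠ 0) (x : 𝔸) :
    x * ww = ww * (scaleHom r hr0 x) := by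
  have hx : x ∈ Algebra.adjoin K ({dd, uu} : Set 𝔸) := by rw [adjoin_du]; trivial
  induction hx using Algebra.adjoin_induction with
  | mem z hz =>
    rcases hz with rfl | rfl
    · rw [scaleHom_d]; exact d_mul_w hr1
    · rw [scaleHom_u]
      exact u_mul_w hr1 hr0
  | algebraMap k => rw [AlgHom.commutes, Algebra.commutes]
  | add x y hx hy ihx ihy => rw [add_mul, ihx, ihy, map_add, mul_add]
  | mul x y hx hy ihx ihy => rw [map_mul, mul_assoc x, ihy, ← mul_assoc, ihx, mul_assoc]

lemma w_mul_eq (hr1 : r ≠ 1) (hr0 : r ≠ 0) (x : 𝔸) :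
    ww * x = (scaleHom r⁻¹ (inv_ne_zero hr0) x) * ww := by
  have hx : x ∈ Algebra.adjoin K ({dd, uu} : Set 𝔸) := by rw [adjoin_du]; trivial
  induction hx using Algebra.adjoin_induction with
  | mem z hz =>
    rcases hz with rfl | rfl
    · rw [scaleHom_d]
      have h := d_mul_w (γ := γ) hr1
      have : ww * (r • dd) = r • (ww * dd) := by rw [mul_smul_comm]
      rw [this] at h
      calc ww * dd = r⁻¹ • (r • (ww * dd)) := by rw [smul_smul, inv_mul_cancel₀ hr0, one_smul]
        _ = r⁻¹ • (dd * ww) := by rw [← h]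
        _ = (r⁻¹ • dd) * ww := (smul_mul_assoc _ _ _).symm
    · rw [scaleHom_u, inv_inv, smul_mul_assoc]
      have h := u_mul_w (γ := γ) hr1 hr0
      rw [mul_smul_comm] at h
      calc ww * uu = r • (r⁻¹ • (ww * uu)) := by
            rw [smul_smul, mul_inv_cancel₀ hr0, one_smul]
        _ = r • (uu * ww) := by rw [← h]
  | algebraMap k => rw [AlgHom.commutes, Algebra.commutes]
  | add x y hx hy ihx ihy => rw [mul_add, ihx, ihy, map_add, add_mul]
  | mul x y hx hy ihx ihy => rw [map_mul, ← mul_assoc, ihx, mul_assoc, ihy, ← mul_assoc]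
local notation "mkS" => RingQuot.mkAlgHom K (SingleRel 𝔸 (dd * uu - r • (uu * dd) + algebraMap K 𝔸 (γ/(r-1))))
local notation "𝔹" => RingQuot (SingleRel 𝔸 (dd * uu - r • (uu * dd) + algebraMap K 𝔸 (γ/(r-1))))

lemma smul_algebraMap'' {B : Type} [Ring B] [Algebra K B] (x y : K) :
    x • (algebraMap K B y) = algebraMap K B (x * y) := by
  rw [Algebra.smul_def, ← map_mul]

lemma relAbar : (mkS dd) * (mkS uu) - r • ((mkS uu) * (mkS dd)) +
    algebraMap K 𝔹 (γ/(r-1)) = 0 := by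
  have h : mkS ww = 0 := by
    rw [RingQuot.mkAlgHom_rel K ⟨rfl, rfl⟩, map_zero]
  simpa [map_add, map_sub, map_mul, map_smul, AlgHom.commutes] using h

section Generic
variable {B : Type} [Ring B] [Algebra K B]

lemma weylrel_of {rr cc : K} {D U : B} (hc : cc ≠ 0)
    (h0 : D * U - rr • (U * D) + algebraMap K B cc = 0) :
    ((-cc⁻¹) • D) * U = rr • (U * ((-cc⁻¹) • D)) + 1 := by
  have h5 : D * U = rr • (U * D) + (-(1:K)) • algebraMap K B cc := by
    calc D * U = (D * U - rr • (U * D) + algebraMap K B cc) +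
          (rr • (U * D) + (-(1:K)) • algebraMap K B cc) := by module
      _ = _ := by rw [h0, zero_add]
  have h3 : ((-cc⁻¹) * (-(1:K))) • (algebraMap K B cc) = 1 := by
    rw [Algebra.smul_def, ← map_mul, show ((-cc⁻¹) * (-(1:K))) * cc = 1 by field_simp,
      map_one]
  calc ((-cc⁻¹) • D) * U = (-cc⁻¹) • (D * U) := smul_mul_assoc _ _ _
    _ = (-cc⁻¹) • (rr • (U * D) + (-(1:K)) • algebraMap K B cc) := by rw [h5]
    _ = (rr * (-cc⁻¹)) • (U * D) + ((-cc⁻¹) * (-(1:K))) • algebraMap K B cc := by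
          module
    _ = rr • (U * ((-cc⁻¹) • D)) + 1 := by rw [h3, mul_smul_comm, smul_smul]

lemma planerel_of {rr cc : K} {D U : B} (hcc : cc = 0)
    (h0 : D * U - rr • (U * D) + algebraMap K B cc = 0) :
    D * U = rr • (U * D) := by
  calc D * U = (D * U - rr • (U * D) + algebraMap K B cc) + rr • (U * D) +
        (-(1:K)) • algebraMap K B cc := by module
    _ = (-(1:K)) • algebraMap K B cc + rr • (U * D) := by rw [h0]; module
    _ = rr • (U * D) := by rw [hcc, map_zero, smul_zero, zero_add]

end Generic

section Weyl
variable {q : K}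
local notation "aC" => QuantizedWeyl.a K q
local notation "bC" => QuantizedWeyl.b K q

lemma relC : aC * bC = q • (bC * aC) + 1 := by
  have h := RingQuot.mkAlgHom_rel K (QuantizedWeylRel.rel (K := K) (q := q))
  simpa [QuantizedWeyl.a, QuantizedWeyl.b, map_mul, map_smul, map_add, map_one] using h

lemma relC3 : aC * (bC * aC) = q • (bC * (aC * aC)) + aC := by
  rw [← mul_assoc, relC]
  simp [add_mul, smul_mul_assoc, mul_assoc]

lemma relC1 : aC * (aC * bC) = (q*q) • (bC * (aC * aC)) + (q+1) • aC := by
  rw [relC, mul_add, mul_one, mul_smul_comm, relC3]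
  module

lemma relC4 : bC * (aC * bC) = q • (bC * (bC * aC)) + bC := by
  rw [relC, mul_add, mul_one, mul_smul_comm]

lemma relC2 : aC * (bC * bC) = (q*q) • (bC * (bC * aC)) + (q+1) • bC := by
  rw [← mul_assoc, relC, add_mul, one_mul, smul_mul_assoc, mul_assoc, relC4]
  module

end Weyl

section Plane
variable {q : K}
local notation "aP" => QuantumPlane.a K q
local notation "bP" => QuantumPlane.b K q

lemma relB : aP * bP = q • (bP * aP) := by
  have h := RingQuot.mkAlgHom_rel K (QuantumPlaneRel.rel (K := K) (q := q))
  simpa [QuantumPlane.a, QuantumPlane.b, map_mul, map_smul] using h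

lemma relB3 : aP * (bP * aP) = q • (bP * (aP * aP)) := by
  rw [← mul_assoc, relB]
  simp [smul_mul_assoc, mul_assoc]

lemma relB1 : aP * (aP * bP) = (q*q) • (bP * (aP * aP)) := by
  rw [relB, mul_smul_comm, relB3]
  module

lemma relB4 : bP * (aP * bP) = q • (bP * (bP * aP)) := by
  rw [relB, mul_smul_comm]

lemma relB2 : aP * (bP * bP) = (q*q) • (bP * (bP * aP)) := by
  rw [← mul_assoc, relB, smul_mul_assoc, mul_assoc, relB4]
  module

end Plane
section ToWeyl
local notation "aC" => QuantizedWeyl.a K r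
local notation "bC" => QuantizedWeyl.b K r

def toWeylAux (hr1 : r ≠ 1) : 𝔸 →ₐ[K] QuantizedWeyl K r :=
  RingQuot.liftAlgHom K ⟨FreeAlgebra.lift K ![(-(γ/(r-1))) • aC, bC], by
    have h1 : r - 1 ≠ 0 := sub_ne_zero.mpr hr1
    rintro x y (h | h)
    · simp only [map_add, map_mul, map_smul, FreeAlgebra.lift_ι_apply,
        Matrix.cons_val_zero, Matrix.cons_val_one, Matrix.head_cons]
      simp only [smul_mul_assoc, mul_smul_comm, smul_smul, smul_add, mul_assoc]
      rw [relC1, relC3]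
      match_scalars <;> field_simp <;> ring
    · simp only [map_add, map_mul, map_smul, FreeAlgebra.lift_ι_apply,
        Matrix.cons_val_zero, Matrix.cons_val_one, Matrix.head_cons]
      simp only [smul_mul_assoc, mul_smul_comm, smul_smul, smul_add, mul_assoc]
      rw [relC2, relC4]
      match_scalars <;> field_simp <;> ring⟩

lemma toWeylAux_d (hr1 : r ≠ 1) : toWeylAux hr1 dd = (-(γ/(r-1))) • aC := by
  simp [toWeylAux, DownUpAlgebra.d, RingQuot.liftAlgHom_mkAlgHom_apply]

lemma toWeylAux_u (hr1 : r ≠ 1) : toWeylAux hr1 uu = bC := by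
  simp [toWeylAux, DownUpAlgebra.u, RingQuot.liftAlgHom_mkAlgHom_apply]

lemma toWeylAux_w (hr1 : r ≠ 1) : toWeylAux hr1 ww = 0 := by
  have h1 : r - 1 ≠ 0 := sub_ne_zero.mpr hr1
  simp only [map_add, map_sub, map_smul, map_mul, toWeylAux_d hr1, toWeylAux_u hr1,
    AlgHom.commutes]
  rw [Algebra.algebraMap_eq_smul_one]
  simp only [smul_mul_assoc, mul_smul_comm, smul_smul]
  rw [relC]
  match_scalars <;> field_simp <;> ring

def toWeyl (hr1 : r ≠ 1) : 𝔹 →ₐ[K] QuantizedWeyl K r :=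
  RingQuot.liftAlgHom K ⟨toWeylAux hr1, by
    rintro x y ⟨rfl, rfl⟩
    rw [toWeylAux_w hr1, map_zero]⟩

def fromWeyl (hr1 : r ≠ 1) (hγ : γ ≠ 0) : QuantizedWeyl K r →ₐ[K] 𝔹 :=
  RingQuot.liftAlgHom K ⟨FreeAlgebra.lift K ![(-(γ/(r-1))⁻¹) • (mkS dd), mkS uu], by
    have h1 : r - 1 ≠ 0 := sub_ne_zero.mpr hr1
    have hc : γ/(r-1) ≠ 0 := div_ne_zero hγ h1
    rintro x y h
    cases h
    simp only [map_add, map_mul, map_smul, map_one, FreeAlgebra.lift_ι_apply,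
      Matrix.cons_val_zero, Matrix.cons_val_one, Matrix.head_cons]
    exact weylrel_of (B := 𝔹) hc (relAbar (K := K) (r := r) (γ := γ))⟩

lemma fromWeyl_a (hr1 : r ≠ 1) (hγ : γ ≠ 0) :
    fromWeyl hr1 hγ (QuantizedWeyl.a K r) = (-(γ/(r-1))⁻¹) • (mkS dd) := by
  simp [fromWeyl, QuantizedWeyl.a, RingQuot.liftAlgHom_mkAlgHom_apply]

lemma fromWeyl_b (hr1 : r ≠ 1) (hγ : γ ≠ 0) :
    fromWeyl hr1 hγ (QuantizedWeyl.b K r) = mkS uu := by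
  simp [fromWeyl, QuantizedWeyl.b, RingQuot.liftAlgHom_mkAlgHom_apply]

lemma toWeyl_mkS (hr1 : r ≠ 1) (x : 𝔸) : toWeyl hr1 (mkS x) = toWeylAux hr1 x := by
  simp [toWeyl, RingQuot.liftAlgHom_mkAlgHom_apply]

def weylEquiv (hr1 : r ≠ 1) (hγ : γ ≠ 0) : 𝔹 ≃ₐ[K] QuantizedWeyl K r := by
  have h1 : r - 1 ≠ 0 := sub_ne_zero.mpr hr1
  have hc : γ/(r-1) ≠ 0 := div_ne_zero hγ h1
  refine AlgEquiv.ofAlgHom (toWeyl hr1) (fromWeyl hr1 hγ) ?_ ?_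
  · apply RingQuot.ringQuot_ext'
    apply FreeAlgebra.hom_ext
    funext i
    fin_cases i <;>
      simp only [Function.comp_apply, AlgHom.coe_comp, AlgHom.coe_id, id_eq, Fin.zero_eta,
        Fin.mk_one]
    · show toWeyl hr1 (fromWeyl hr1 hγ (QuantizedWeyl.a K r)) = QuantizedWeyl.a K r
      rw [fromWeyl_a, map_smul, toWeyl_mkS, toWeylAux_d hr1, smul_smul]
      rw [neg_mul_neg, inv_mul_cancel₀ hc, one_smul]
    · show toWeyl hr1 (fromWeyl hr1 hγ (QuantizedWeyl.b K r)) = QuantizedWeyl.b K r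
      rw [fromWeyl_b, toWeyl_mkS, toWeylAux_u hr1]
  · apply RingQuot.ringQuot_ext'
    apply RingQuot.ringQuot_ext'
    apply FreeAlgebra.hom_ext
    funext i
    fin_cases i <;>
      simp only [Function.comp_apply, AlgHom.coe_comp, AlgHom.coe_id, id_eq, Fin.zero_eta,
        Fin.mk_one]
    · show fromWeyl hr1 hγ (toWeyl hr1 (mkS dd)) = mkS dd
      rw [toWeyl_mkS, toWeylAux_d hr1, map_smul, fromWeyl_a, smul_smul]
      rw [neg_mul_neg, mul_inv_cancel₀ hc, one_smul]
    · show fromWeyl hr1 hγ (toWeyl hr1 (mkS uu)) = mkS uu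
      rw [toWeyl_mkS, toWeylAux_u hr1, fromWeyl_b]

end ToWeyl
section ToPlane
local notation "aP" => QuantumPlane.a K r
local notation "bP" => QuantumPlane.b K r

def toPlaneAux (hγ : γ = 0) : 𝔸 →ₐ[K] QuantumPlane K r :=
  RingQuot.liftAlgHom K ⟨FreeAlgebra.lift K ![aP, bP], by
    rintro x y (h | h)
    · simp only [map_add, map_mul, map_smul, FreeAlgebra.lift_ι_apply,
        Matrix.cons_val_zero, Matrix.cons_val_one, Matrix.head_cons]
      simp only [smul_mul_assoc, mul_smul_comm, smul_smul, smul_add, mul_assoc]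
      rw [relB1, relB3]
      match_scalars <;> simp [hγ] <;> ring
    · simp only [map_add, map_mul, map_smul, FreeAlgebra.lift_ι_apply,
        Matrix.cons_val_zero, Matrix.cons_val_one, Matrix.head_cons]
      simp only [smul_mul_assoc, mul_smul_comm, smul_smul, smul_add, mul_assoc]
      rw [relB2, relB4]
      match_scalars <;> simp [hγ] <;> ring⟩

lemma toPlaneAux_d (hγ : γ = 0) : toPlaneAux hγ dd = aP := by
  simp [toPlaneAux, DownUpAlgebra.d, RingQuot.liftAlgHom_mkAlgHom_apply]

lemma toPlaneAux_u (hγ : γ = 0) : toPlaneAux hγ uu = bP := by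
  simp [toPlaneAux, DownUpAlgebra.u, RingQuot.liftAlgHom_mkAlgHom_apply]

lemma toPlaneAux_w (hγ : γ = 0) : toPlaneAux hγ ww = 0 := by
  have hc0 : γ/(r-1) = 0 := by rw [hγ, zero_div]
  simp only [map_add, map_sub, map_smul, map_mul, toPlaneAux_d hγ, toPlaneAux_u hγ,
    AlgHom.commutes]
  rw [relB, hc0, map_zero, sub_self, zero_add]

def toPlane (hγ : γ = 0) : 𝔹 →ₐ[K] QuantumPlane K r :=
  RingQuot.liftAlgHom K ⟨toPlaneAux hγ, by
    rintro x y ⟨rfl, rfl⟩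
    rw [toPlaneAux_w hγ, map_zero]⟩

def fromPlane (hγ : γ = 0) : QuantumPlane K r →ₐ[K] 𝔹 :=
  RingQuot.liftAlgHom K ⟨FreeAlgebra.lift K ![mkS dd, mkS uu], by
    have hc0 : γ/(r-1) = 0 := by rw [hγ, zero_div]
    rintro x y h
    cases h
    simp only [map_mul, map_smul, FreeAlgebra.lift_ι_apply,
      Matrix.cons_val_zero, Matrix.cons_val_one, Matrix.head_cons]
    exact planerel_of (B := 𝔹) hc0 (relAbar (K := K) (r := r) (γ := γ))⟩

lemma fromPlane_a (hγ : γ = 0) : fromPlane hγ (QuantumPlane.a K r) = mkS dd := by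
  simp [fromPlane, QuantumPlane.a, RingQuot.liftAlgHom_mkAlgHom_apply]

lemma fromPlane_b (hγ : γ = 0) : fromPlane hγ (QuantumPlane.b K r) = mkS uu := by
  simp [fromPlane, QuantumPlane.b, RingQuot.liftAlgHom_mkAlgHom_apply]

lemma toPlane_mkS (hγ : γ = 0) (x : 𝔸) : toPlane hγ (mkS x) = toPlaneAux hγ x := by
  simp [toPlane, RingQuot.liftAlgHom_mkAlgHom_apply]

def planeEquiv (hγ : γ = 0) : 𝔹 ≃ₐ[K] QuantumPlane K r := by
  refine AlgEquiv.ofAlgHom (toPlane hγ) (fromPlane hγ) ?_ ?_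
  · apply RingQuot.ringQuot_ext'
    apply FreeAlgebra.hom_ext
    funext i
    fin_cases i <;>
      simp only [Function.comp_apply, AlgHom.coe_comp, AlgHom.coe_id, id_eq, Fin.zero_eta,
        Fin.mk_one]
    · show toPlane hγ (fromPlane hγ (QuantumPlane.a K r)) = QuantumPlane.a K r
      rw [fromPlane_a, toPlane_mkS, toPlaneAux_d hγ]
    · show toPlane hγ (fromPlane hγ (QuantumPlane.b K r)) = QuantumPlane.b K r
      rw [fromPlane_b, toPlane_mkS, toPlaneAux_u hγ]
  · apply RingQuot.ringQuot_ext'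
    apply RingQuot.ringQuot_ext'
    apply FreeAlgebra.hom_ext
    funext i
    fin_cases i <;>
      simp only [Function.comp_apply, AlgHom.coe_comp, AlgHom.coe_id, id_eq, Fin.zero_eta,
        Fin.mk_one]
    · show fromPlane hγ (toPlane hγ (mkS dd)) = mkS dd
      rw [toPlane_mkS, toPlaneAux_d hγ, fromPlane_a]
    · show fromPlane hγ (toPlane hγ (mkS uu)) = mkS uu
      rw [toPlane_mkS, toPlaneAux_u hγ, fromPlane_b]

end ToPlane

end DUAux
/-- Let `r` be a primitive `n`-th root of unity with `n > 1`, `A = A(2r, -r², γ)` and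
`w = du - r·ud + γ/(r-1)`.  Then `w` is a normal element of `A` (`Aw = wA`), and the
quotient `Ā = A/AwA = A/Aw` is generated by the images `d̄`, `ū` of `d`, `u` subject to
the single relation `d̄ū - r·ūd̄ + γ/(r-1) = 0`; consequently `Ā` is isomorphic to the
quantized Weyl algebra `C(r)` when `γ ≠ 0` and to the quantum plane `B(r)` when
`γ = 0`. -/
theorem downUp_quotient_by_normal_element (K : Type) [Field K] (n : ℕ) (hn : 1 < n)
    (r : K) (hr : IsPrimitiveRoot r n) (γ : K) :
    (Set.range (fun x : DownUpAlgebra K (2 * r) (-(r ^ 2)) γ =>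
        x * (DownUpAlgebra.d K (2 * r) (-(r ^ 2)) γ * DownUpAlgebra.u K (2 * r) (-(r ^ 2)) γ -
          r • (DownUpAlgebra.u K (2 * r) (-(r ^ 2)) γ * DownUpAlgebra.d K (2 * r) (-(r ^ 2)) γ) +
          algebraMap K (DownUpAlgebra K (2 * r) (-(r ^ 2)) γ) (γ / (r - 1)))) =
      Set.range (fun x : DownUpAlgebra K (2 * r) (-(r ^ 2)) γ =>
        (DownUpAlgebra.d K (2 * r) (-(r ^ 2)) γ * DownUpAlgebra.u K (2 * r) (-(r ^ 2)) γ -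
          r • (DownUpAlgebra.u K (2 * r) (-(r ^ 2)) γ * DownUpAlgebra.d K (2 * r) (-(r ^ 2)) γ) +
          algebraMap K (DownUpAlgebra K (2 * r) (-(r ^ 2)) γ) (γ / (r - 1))) * x)) ∧
    (RingQuot.mkAlgHom K (SingleRel (DownUpAlgebra K (2 * r) (-(r ^ 2)) γ)
          (DownUpAlgebra.d K (2 * r) (-(r ^ 2)) γ * DownUpAlgebra.u K (2 * r) (-(r ^ 2)) γ -
            r • (DownUpAlgebra.u K (2 * r) (-(r ^ 2)) γ * DownUpAlgebra.d K (2 * r) (-(r ^ 2)) γ) +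
            algebraMap K (DownUpAlgebra K (2 * r) (-(r ^ 2)) γ) (γ / (r - 1))))
        (DownUpAlgebra.d K (2 * r) (-(r ^ 2)) γ) *
      RingQuot.mkAlgHom K _ (DownUpAlgebra.u K (2 * r) (-(r ^ 2)) γ) -
      r • (RingQuot.mkAlgHom K _ (DownUpAlgebra.u K (2 * r) (-(r ^ 2)) γ) *
        RingQuot.mkAlgHom K _ (DownUpAlgebra.d K (2 * r) (-(r ^ 2)) γ)) +
      algebraMap K _ (γ / (r - 1)) = 0) ∧
    (Algebra.adjoin K
      ({RingQuot.mkAlgHom K (SingleRel (DownUpAlgebra K (2 * r) (-(r ^ 2)) γ)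
          (DownUpAlgebra.d K (2 * r) (-(r ^ 2)) γ * DownUpAlgebra.u K (2 * r) (-(r ^ 2)) γ -
            r • (DownUpAlgebra.u K (2 * r) (-(r ^ 2)) γ * DownUpAlgebra.d K (2 * r) (-(r ^ 2)) γ) +
            algebraMap K (DownUpAlgebra K (2 * r) (-(r ^ 2)) γ) (γ / (r - 1))))
          (DownUpAlgebra.d K (2 * r) (-(r ^ 2)) γ),
        RingQuot.mkAlgHom K _ (DownUpAlgebra.u K (2 * r) (-(r ^ 2)) γ)} :
        Set (RingQuot (SingleRel (DownUpAlgebra K (2 * r) (-(r ^ 2)) γ)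
          (DownUpAlgebra.d K (2 * r) (-(r ^ 2)) γ * DownUpAlgebra.u K (2 * r) (-(r ^ 2)) γ -
            r • (DownUpAlgebra.u K (2 * r) (-(r ^ 2)) γ * DownUpAlgebra.d K (2 * r) (-(r ^ 2)) γ) +
            algebraMap K (DownUpAlgebra K (2 * r) (-(r ^ 2)) γ) (γ / (r - 1)))))) = ⊤) ∧
    (γ ≠ 0 → Nonempty
      ((RingQuot (SingleRel (DownUpAlgebra K (2 * r) (-(r ^ 2)) γ)
          (DownUpAlgebra.d K (2 * r) (-(r ^ 2)) γ * DownUpAlgebra.u K (2 * r) (-(r ^ 2)) γ -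
            r • (DownUpAlgebra.u K (2 * r) (-(r ^ 2)) γ * DownUpAlgebra.d K (2 * r) (-(r ^ 2)) γ) +
            algebraMap K (DownUpAlgebra K (2 * r) (-(r ^ 2)) γ) (γ / (r - 1))))) ≃ₐ[K]
        QuantizedWeyl K r)) ∧
    (γ = 0 → Nonempty
      ((RingQuot (SingleRel (DownUpAlgebra K (2 * r) (-(r ^ 2)) γ)
          (DownUpAlgebra.d K (2 * r) (-(r ^ 2)) γ * DownUpAlgebra.u K (2 * r) (-(r ^ 2)) γ -
            r • (DownUpAlgebra.u K (2 * r) (-(r ^ 2)) γ * DownUpAlgebra.d K (2 * r) (-(r ^ 2)) γ) +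
            algebraMap K (DownUpAlgebra K (2 * r) (-(r ^ 2)) γ) (γ / (r - 1))))) ≃ₐ[K]
        QuantumPlane K r)) := by
  classical
  have hr1 : r ≠ 1 := hr.ne_one hn
  have hr0 : r ≠ 0 := hr.ne_zero (by omega)
  refine ⟨?_, ?_, ?_, ?_, ?_⟩
  · ext z
    simp only [Set.mem_range]
    constructor
    · rintro ⟨x, rfl⟩
      exact ⟨DUAux.scaleHom r hr0 x, (DUAux.mul_w_eq hr1 hr0 x).symm⟩
    · rintro ⟨x, rfl⟩
      exact ⟨DUAux.scaleHom r⁻¹ (inv_ne_zero hr0) x, (DUAux.w_mul_eq hr1 hr0 x).symm⟩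
  · exact DUAux.relAbar
  · have hsurj : Function.Surjective
        ⇑((RingQuot.mkAlgHom K (SingleRel (DownUpAlgebra K (2 * r) (-(r ^ 2)) γ)
          (DownUpAlgebra.d K (2 * r) (-(r ^ 2)) γ * DownUpAlgebra.u K (2 * r) (-(r ^ 2)) γ -
            r • (DownUpAlgebra.u K (2 * r) (-(r ^ 2)) γ * DownUpAlgebra.d K (2 * r) (-(r ^ 2)) γ) +
            algebraMap K (DownUpAlgebra K (2 * r) (-(r ^ 2)) γ) (γ / (r - 1))))).comp
          (RingQuot.mkAlgHom K (DownUpRel K (2 * r) (-(r ^ 2)) γ))) := by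
      intro z
      obtain ⟨y, hy⟩ := RingQuot.mkAlgHom_surjective K _ z
      obtain ⟨x, hx⟩ := RingQuot.mkAlgHom_surjective K _ y
      exact ⟨x, by simp [hx, hy]⟩
    have h := DUAux.adjoin_pair_eq_top (K := K) (B := RingQuot (SingleRel (DownUpAlgebra K (2 * r) (-(r ^ 2)) γ) (DownUpAlgebra.d K (2 * r) (-(r ^ 2)) γ * DownUpAlgebra.u K (2 * r) (-(r ^ 2)) γ - r • (DownUpAlgebra.u K (2 * r) (-(r ^ 2)) γ * DownUpAlgebra.d K (2 * r) (-(r ^ 2)) γ) + algebraMap K (DownUpAlgebra K (2 * r) (-(r ^ 2)) γ) (γ / (r - 1))))) _ hsurj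
    exact h
  · intro hγ
    exact ⟨DUAux.weylEquiv hr1 hγ⟩
  · intro hγ
    exact ⟨DUAux.planeEquiv hγ⟩

end
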